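/- Let N, R ≤ N, κ = diag(κ',κ'') with κ', κ'' diagonal real with strictly positive entries of sizes R×R and (N−R)×(N−R). Let Q₀ be a real (N−R)×R matrix such that for every i ≤ R, j > R, either (Q₀)_{ji} = 0 or κ''_j < κ'_i, and X₀ a symmetric real R×R matrix. Define C = [[I,0],[Q₀,0]], D = [[X₀,−Q₀ᵀ],[0,I]], σ(r) = κ^{−1/2}(e^{κr}C + e^{−κr}D), and assume σ(r) is invertible for all r ≥ 0; set U(r) = σ'(r)σ(r)⁻¹ and U_∞ = diag(κ'_1,…,κ'_R,−κ''_{R+1},…,−κ''_N). Let k = diag(k₁,…,k_N) be a complex diagonal matrix such that k² + κ² = z·I for some z ∈ ℂ and such that U_∞ − ik is invertible. Then the matrix-valued function f̃(r) := (U(r) − ik) e^{ikr} (U_∞ − ik)⁻¹ satisfies the transformed Schrödinger equation f̃''(r) = (κ² − 2U'(r))f̃(r) − z f̃(r) for all r ≥ 0, and f̃(r)e^{−ikr} → I as r → ∞. -/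

import Mathlib

set_option maxHeartbeats 2000000
set_option synthInstance.maxHeartbeats 1000000
set_option linter.unusedSectionVars false
open Matrix Filter

section Toolkit
variable {n : Type*} [Fintype n] [DecidableEq n] {𝔸 : Type*} [NormedField 𝔸]
attribute [local instance] Matrix.linftyOpNormedAddCommGroup Matrix.linftyOpNormedRing
  Matrix.linftyOpNormedAlgebra Matrix.linftyOpNormedSpace

lemma std_apply (i j i' j' : n) (a : 𝔸) :
    single i j a i' j' = if i = i' ∧ j = j' then a else 0 := rfl

lemma norm_std_le (i j : n) (a : 𝔸) : ‖single i j a‖ ≤ ‖a‖ := by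
  have : ‖single i j a‖₊ ≤ ‖a‖₊ := by
    rw [Matrix.linfty_opNNNorm_def]
    apply Finset.sup_le
    intro i' _
    rcases eq_or_ne i i' with rfl | hi
    · calc (∑ j', ‖single i j a i j'‖₊)
          = ∑ j', (if j' = j then ‖a‖₊ else 0) := by
            refine Finset.sum_congr rfl fun j' _ => ?_
            rcases eq_or_ne j' j with rfl | hj
            · simp [std_apply]
            · rw [std_apply, if_neg (fun h => hj h.2.symm), if_neg hj, nnnorm_zero]
        _ ≤ ‖a‖₊ := by simp
    · calc (∑ j', ‖single i j a i' j'‖₊)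
          = ∑ j' : n, (0 : NNReal) := by
            refine Finset.sum_congr rfl fun j' _ => ?_
            simp [std_apply, hi]
        _ ≤ ‖a‖₊ := by simp
  exact_mod_cast this

variable [NormedAlgebra ℝ 𝔸]

noncomputable def stdCLM (i j : n) : 𝔸 →L[ℝ] Matrix n n 𝔸 :=
  LinearMap.mkContinuous
    { toFun := fun a => single i j a,
      map_add' := fun a b => (single_add i j a b)
      map_smul' := fun c a => (smul_single c i j a).symm }
    1 (fun a => by simpa using norm_std_le i j a)

lemma norm_entry_le (M : Matrix n n 𝔸) (i j : n) : ‖M i j‖ ≤ ‖M‖ := by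
  have h1 : ‖M i j‖₊ ≤ ∑ j', ‖M i j'‖₊ :=
    Finset.single_le_sum (f := fun j' => ‖M i j'‖₊) (fun _ _ => zero_le) (Finset.mem_univ j)
  have h2 : (∑ j', ‖M i j'‖₊) ≤ ‖M‖₊ := by
    rw [Matrix.linfty_opNNNorm_def]
    exact Finset.le_sup (f := fun i => ∑ j', ‖M i j'‖₊) (Finset.mem_univ i)
  exact_mod_cast h1.trans h2

noncomputable def entryCLM (i j : n) : Matrix n n 𝔸 →L[ℝ] 𝔸 :=
  LinearMap.mkContinuous
    { toFun := fun M => M i j, map_add' := fun _ _ => rfl, map_smul' := fun _ _ => rfl }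
    1 (fun M => by rw [one_mul]; exact norm_entry_le M i j)

lemma hasDerivAt_matrix {A : ℝ → Matrix n n 𝔸} {A' : Matrix n n 𝔸} {r : ℝ}
    (h : ∀ i j, HasDerivAt (fun t => A t i j) (A' i j) r) : HasDerivAt A A' r := by
  have h1 : HasDerivAt (fun t => ∑ i, ∑ j, single i j (A t i j))
      (∑ i, ∑ j, single i j (A' i j)) r := by
    refine HasDerivAt.fun_sum fun i _ => HasDerivAt.fun_sum fun j _ => ?_
    have h3 := (stdCLM (n := n) (𝔸 := 𝔸) i j).hasFDerivAt.comp_hasDerivAt r (h i j)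
    exact h3
  have e1 : (fun t => ∑ i, ∑ j, single i j (A t i j)) = A := by
    funext t; exact (matrix_eq_sum_single (A t)).symm
  rw [e1, (matrix_eq_sum_single A').symm] at h1
  exact h1

lemma hasDerivAt_entry {A : ℝ → Matrix n n 𝔸} {A' : Matrix n n 𝔸} {r : ℝ}
    (h : HasDerivAt A A' r) (i j : n) : HasDerivAt (fun t => A t i j) (A' i j) r := by
  have h2 := (entryCLM (𝔸 := 𝔸) (n := n) i j).hasFDerivAt.comp_hasDerivAt r h
  exact h2

lemma tendsto_entry {A : ℝ → Matrix n n 𝔸} {L : Matrix n n 𝔸}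
    (h : Tendsto A atTop (nhds L)) (i j : n) :
    Tendsto (fun t => A t i j) atTop (nhds (L i j)) := by
  have h2 := ((entryCLM (𝔸 := 𝔸) (n := n) i j).continuous.tendsto L).comp h
  exact h2

lemma tendsto_matrix {A : ℝ → Matrix n n 𝔸} {L : Matrix n n 𝔸}
    (h : ∀ i j, Tendsto (fun t => A t i j) atTop (nhds (L i j))) :
    Tendsto A atTop (nhds L) := by
  have h1 : Tendsto (fun t => ∑ i, ∑ j, single i j (A t i j))
      atTop (nhds (∑ i, ∑ j, single i j (L i j))) := by
    refine tendsto_finset_sum _ fun i _ => tendsto_finset_sum _ fun j _ => ?_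
    have h3 := ((stdCLM (n := n) (𝔸 := 𝔸) i j).continuous.tendsto (L i j)).comp (h i j)
    exact h3
  have e1 : (fun t => ∑ i, ∑ j, single i j (A t i j)) = A := by
    funext t; exact (matrix_eq_sum_single (A t)).symm
  rw [e1, (matrix_eq_sum_single L).symm] at h1
  exact h1

lemma hasDerivAt_diagonal {g : n → ℝ → 𝔸} {g' : n → 𝔸} {r : ℝ}
    (h : ∀ i, HasDerivAt (g i) (g' i) r) :
    HasDerivAt (fun t => diagonal (fun i => g i t)) (diagonal g') r := by
  apply hasDerivAt_matrix
  intro i j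
  rcases eq_or_ne i j with rfl | hij
  · simpa only [Matrix.diagonal_apply_eq] using h i
  · simpa only [Matrix.diagonal_apply_ne _ hij] using hasDerivAt_const r (0:𝔸)
end Toolkit

lemma key_alg {A : Type*} [Ring A] [Algebra ℂ A] (X P G K : A) (z : ℂ)
    (hKP : K * P = P * K) (hP2 : P * P = K - z • (1:A)) :
    (-((K - X*X) * X + X * (K - X*X)) * G + (K - X*X) * (P * G)) +
      ((K - X*X) * (P * G) + (X - P) * (P * (P * G)))
      = (K - (2:ℂ) • (K - X*X)) * ((X - P) * G) - z • ((X - P) * G) := by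
  have h2 : ∀ a : A, z • a = a * (z • 1) := fun a => by
    rw [Algebra.smul_def, Algebra.smul_def, mul_one, ← Algebra.commutes]
  have hb : (-((K - X*X) * X + X * (K - X*X)) + ((K - X*X) * P + ((K - X*X) * P + (X - P) * (P * P))))
      = ((K - (2:ℂ) • (K - X*X)) * (X - P) - z • (X - P)) := by
    rw [hP2, two_smul, h2 (X - P)]
    set w := z • (1:A) with hw
    calc -((K - X*X) * X + X * (K - X*X)) + ((K - X*X) * P + ((K - X*X) * P + (X - P) * (K - w)))
        = -(K*X) + 2*(X*X*X) + 2*(K*P) - 2*(X*(X*P)) - X*w + P*w - P*K := by noncomm_ring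
      _ = -(K*X) + 2*(X*X*X) + (K*P) - 2*(X*(X*P)) - X*w + P*w := by rw [hKP]; noncomm_ring
      _ = (K - (K - X * X + (K - X * X))) * (X - P) - (X - P) * w := by noncomm_ring
  calc (-((K - X*X) * X + X * (K - X*X)) * G + (K - X*X) * (P * G)) +
      ((K - X*X) * (P * G) + (X - P) * (P * (P * G)))
      = ((-((K - X*X) * X + X * (K - X*X)) + ((K - X*X) * P + ((K - X*X) * P + (X - P) * (P * P))))) * G := by
        simp only [add_mul, mul_assoc, add_assoc]
    _ = ((K - (2:ℂ) • (K - X*X)) * (X - P) - z • (X - P)) * G := by rw [hb]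
    _ = (K - (2:ℂ) • (K - X*X)) * ((X - P) * G) - z • ((X - P) * G) := by
        simp only [sub_mul, mul_assoc, smul_mul_assoc]

lemma texp0 {c : ℝ} (hc : c < 0) (b : ℝ) :
    Tendsto (fun t : ℝ => b * Real.exp (c * t)) atTop (nhds 0) := by
  have h1 : Tendsto (fun t : ℝ => c * t) atTop atBot :=
    (tendsto_const_mul_atBot_of_neg hc).mpr tendsto_id
  have h2 := Real.tendsto_exp_atBot.comp h1
  simpa using h2.const_mul b

lemma tend_atom {A c L : ℝ} (h : (c = 0 ∧ A = L) ∨ ((A = 0 ∨ c < 0) ∧ L = 0)) :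
    Tendsto (fun t : ℝ => A * Real.exp (c * t)) atTop (nhds L) := by
  rcases h with ⟨hc, hA⟩ | ⟨hAc, hL⟩
  · subst hc hA; simpa using tendsto_const_nhds (α := ℝ) (f := atTop) (a := A)
  · subst hL
    rcases hAc with hA | hc
    · subst hA; simpa using tendsto_const_nhds (α := ℝ) (f := atTop) (a := (0:ℝ))
    · exact texp0 hc A


lemma tend_shape1 {A B c1 c2 e L : ℝ}
    (h : Filter.Tendsto (fun t : ℝ => A * Real.exp ((c1 + e) * t) + B * Real.exp ((c2 + e) * t))
      Filter.atTop (nhds L)) :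
    Filter.Tendsto (fun t : ℝ => (Real.exp (c1 * t) * A + Real.exp (c2 * t) * B) * Real.exp (e * t))
      Filter.atTop (nhds L) := by
  refine h.congr fun t => ?_
  rw [show (c1 + e) * t = c1 * t + e * t by ring, show (c2 + e) * t = c2 * t + e * t by ring,
    Real.exp_add, Real.exp_add]
  ring

lemma tend_shape2 {a1 a2 A B c1 c2 e L : ℝ}
    (h : Filter.Tendsto (fun t : ℝ => (a1 * A) * Real.exp ((c1 + e) * t) +
        (a2 * B) * Real.exp ((c2 + e) * t)) Filter.atTop (nhds L)) :
    Filter.Tendsto (fun t : ℝ => (a1 * Real.exp (c1 * t) * A + a2 * Real.exp (c2 * t) * B)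
      * Real.exp (e * t)) Filter.atTop (nhds L) := by
  refine h.congr fun t => ?_
  rw [show (c1 + e) * t = c1 * t + e * t by ring, show (c2 + e) * t = c2 * t + e * t by ring,
    Real.exp_add, Real.exp_add]
  ring


section MainAux
attribute [local instance] Matrix.linftyOpNormedAddCommGroup Matrix.linftyOpNormedRing
  Matrix.linftyOpNormedAlgebra Matrix.linftyOpNormedSpace

theorem prop1_aux (N R : ℕ)
    (κ' : Fin R → ℝ) (κ'' : Fin (N - R) → ℝ)
    (hκ' : ∀ i, 0 < κ' i) (hκ'' : ∀ j, 0 < κ'' j)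
    (Q₀ : Matrix (Fin (N - R)) (Fin R) ℝ)
    (hQ₀ : ∀ (i : Fin R) (j : Fin (N - R)), Q₀ j i = 0 ∨ κ'' j < κ' i)
    (X₀ : Matrix (Fin R) (Fin R) ℝ)
    (k : Fin R ⊕ Fin (N - R) → ℂ) (z : ℂ)
    (hk : ∀ i, k i ^ 2 + ((Sum.elim κ' κ'' i : ℝ) : ℂ) ^ 2 = z)
    (κv : Fin R ⊕ Fin (N - R) → ℝ)
    (C D : Matrix (Fin R ⊕ Fin (N - R)) (Fin R ⊕ Fin (N - R)) ℝ)
    (σ σd U Ud : ℝ → Matrix (Fin R ⊕ Fin (N - R)) (Fin R ⊕ Fin (N - R)) ℝ)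
    (Uinf ik : Matrix (Fin R ⊕ Fin (N - R)) (Fin R ⊕ Fin (N - R)) ℂ)
    (ft ftd ftdd : ℝ → Matrix (Fin R ⊕ Fin (N - R)) (Fin R ⊕ Fin (N - R)) ℂ)
    (hκve : κv = Sum.elim κ' κ'')
    (hCe : C = fromBlocks 1 0 Q₀ 0)
    (hDe : D = fromBlocks X₀ (-Q₀ᵀ) 0 1)
    (hσe : σ = fun s => diagonal (fun i => (Real.sqrt (κv i))⁻¹) *
        (diagonal (fun i => Real.exp (κv i * s)) * C +
          diagonal (fun i => Real.exp (-(κv i) * s)) * D))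
    (hσde : σd = fun s => Matrix.of fun i j => deriv (fun t => σ t i j) s)
    (hUe : U = fun s => σd s * (σ s)⁻¹)
    (hUde : Ud = fun s => Matrix.of fun i j => derivWithin (fun t => U t i j) (Set.Ici (0:ℝ)) s)
    (hUinfe : Uinf = diagonal (Sum.elim (fun i => ((κ' i : ℝ) : ℂ)) fun j => -((κ'' j : ℝ) : ℂ)))
    (hike : ik = diagonal fun i => Complex.I * k i)
    (hfte : ft = fun s => ((U s).map (fun x => (x : ℂ)) - ik) *
        diagonal (fun i => Complex.exp (Complex.I * k i * s)) * (Uinf - ik)⁻¹)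
    (hftde : ftd = fun s => Matrix.of fun i j => derivWithin (fun t => ft t i j) (Set.Ici (0:ℝ)) s)
    (hftdde : ftdd = fun s => Matrix.of fun i j => derivWithin (fun t => ftd t i j) (Set.Ici (0:ℝ)) s)
    (hσu : ∀ r : ℝ, 0 ≤ r → IsUnit (σ r))
    (hUinfu : IsUnit (Uinf - ik)) :
    (∀ r : ℝ, 0 ≤ r →
      ftdd r = (diagonal (fun i => ((κv i : ℝ) : ℂ) ^ 2) -
          (2 : ℂ) • (Ud r).map (fun x => (x : ℂ))) * ft r - z • ft r) ∧
    (∀ a b, Tendsto (fun r : ℝ => (ft r * diagonal fun i => Complex.exp (-(Complex.I * k i * r))) a b)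
      atTop (nhds ((1 : Matrix (Fin R ⊕ Fin (N - R)) (Fin R ⊕ Fin (N - R)) ℂ) a b))) := by
  have hκv : ∀ i, 0 < κv i := by
    intro i; rw [hκve]; rcases i with i | j
    · simpa using hκ' i
    · simpa using hκ'' j
  set σ₁ : ℝ → Matrix (Fin R ⊕ Fin (N - R)) (Fin R ⊕ Fin (N - R)) ℝ := fun s =>
    diagonal (fun i => (Real.sqrt (κv i))⁻¹) *
      (diagonal (fun i => κv i * Real.exp (κv i * s)) * C +
        diagonal (fun i => -(κv i) * Real.exp (-(κv i) * s)) * D) with hσ₁e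
  have hσD : ∀ r, HasDerivAt σ (σ₁ r) r := by
    intro r
    rw [hσe, hσ₁e]
    have h1 : HasDerivAt (fun s => diagonal (fun i => Real.exp (κv i * s)) :
        ℝ → Matrix (Fin R ⊕ Fin (N - R)) (Fin R ⊕ Fin (N - R)) ℝ)
        (diagonal (fun i => κv i * Real.exp (κv i * r))) r :=
      hasDerivAt_diagonal fun i => by
        simpa [mul_comm] using ((hasDerivAt_id r).const_mul (κv i)).exp
    have h2 : HasDerivAt (fun s => diagonal (fun i => Real.exp (-(κv i) * s)) :
        ℝ → Matrix (Fin R ⊕ Fin (N - R)) (Fin R ⊕ Fin (N - R)) ℝ)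
        (diagonal (fun i => -(κv i) * Real.exp (-(κv i) * r))) r :=
      hasDerivAt_diagonal fun i => by
        simpa [mul_comm] using ((hasDerivAt_id r).const_mul (-(κv i))).exp
    exact ((h1.mul_const C).add (h2.mul_const D)).const_mul _
  have hσd_eq : σd = σ₁ := by
    funext s; rw [hσde]; ext a b
    simp only [Matrix.of_apply]
    exact (hasDerivAt_entry (hσD s) a b).deriv
  set K2 : Matrix (Fin R ⊕ Fin (N - R)) (Fin R ⊕ Fin (N - R)) ℝ :=
    diagonal (fun i => κv i ^ 2) with hK2e
  have hσ₁D : ∀ r, HasDerivAt σ₁ (K2 * σ r) r := by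
    intro r
    have h1 : HasDerivAt (fun s => diagonal (fun i => κv i * Real.exp (κv i * s)) :
        ℝ → Matrix (Fin R ⊕ Fin (N - R)) (Fin R ⊕ Fin (N - R)) ℝ)
        (diagonal (fun i => κv i * (κv i * Real.exp (κv i * r)))) r :=
      hasDerivAt_diagonal fun i => by
        simpa [mul_comm, mul_left_comm] using
          (((hasDerivAt_id r).const_mul (κv i)).exp.const_mul (κv i))
    have h2 : HasDerivAt (fun s => diagonal (fun i => -(κv i) * Real.exp (-(κv i) * s)) :
        ℝ → Matrix (Fin R ⊕ Fin (N - R)) (Fin R ⊕ Fin (N - R)) ℝ)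
        (diagonal (fun i => -(κv i) * (-(κv i) * Real.exp (-(κv i) * r)))) r :=
      hasDerivAt_diagonal fun i => by
        simpa [mul_comm, mul_left_comm] using
          (((hasDerivAt_id r).const_mul (-(κv i))).exp.const_mul (-(κv i)))
    have h3 := ((h1.mul_const C).add (h2.mul_const D)).const_mul
      (diagonal (fun i => (Real.sqrt (κv i))⁻¹))
    rw [hσ₁e]
    refine h3.congr_deriv (Eq.symm ?_)
    rw [hσe, hK2e]
    ext a b
    simp only [mul_add, ← mul_assoc, diagonal_mul_diagonal, Matrix.add_apply, Matrix.diagonal_mul]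
    ring
  have hUf : ∀ s, U s = σ₁ s * Ring.inverse (σ s) := by
    intro s; rw [hUe, hσd_eq]
    show σ₁ s * (σ s)⁻¹ = σ₁ s * Ring.inverse (σ s)
    rw [Matrix.nonsing_inv_eq_ringInverse]
  have hUD : ∀ r, 0 ≤ r → HasDerivAt U (K2 - U r * U r) r := by
    intro r hr
    obtain ⟨u, hu⟩ := hσu r hr
    have hFD := hasFDerivAt_ringInverse (𝕜 := ℝ) u
    rw [hu] at hFD
    have hinv0 := hFD.comp_hasDerivAt r (hσD r)
    have hinv : HasDerivAt (fun t => Ring.inverse (σ t))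
        (-(Ring.inverse (σ r) * σ₁ r * Ring.inverse (σ r))) r := by
      have hval : (-(ContinuousLinearMap.mulLeftRight ℝ _ ↑u⁻¹ ↑u⁻¹)) (σ₁ r)
          = -(Ring.inverse (σ r) * σ₁ r * Ring.inverse (σ r)) := by
        rw [← hu]
        simp [ContinuousLinearMap.mulLeftRight_apply, Ring.inverse_unit]
      rw [← hval]
      exact hinv0
    have hmul := (hσ₁D r).mul hinv
    have hcancel : σ r * Ring.inverse (σ r) = 1 := Ring.mul_inverse_cancel _ (hσu r hr)
    have hval2 : (K2 * σ r) * Ring.inverse (σ r) +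
        σ₁ r * -(Ring.inverse (σ r) * σ₁ r * Ring.inverse (σ r)) = K2 - U r * U r := by
      rw [hUf r, mul_assoc K2, hcancel, mul_one, sub_eq_add_neg]
      congr 1
      noncomm_ring
    have h6 : HasDerivAt (fun t => σ₁ t * Ring.inverse (σ t)) (K2 - U r * U r) r := hval2 ▸ hmul
    have hfun : (fun t => σ₁ t * Ring.inverse (σ t)) = U := by funext t; exact (hUf t).symm
    rw [hfun] at h6; exact h6
  have hUd_eq : ∀ r, 0 ≤ r → Ud r = K2 - U r * U r := by
    intro r hr; rw [hUde]; ext a b; simp only [Matrix.of_apply]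
    exact ((hasDerivAt_entry (hUD r hr) a b).hasDerivWithinAt.derivWithin
      (uniqueDiffOn_Ici (0:ℝ) r hr))
  -- complex side
  set Xc : ℝ → Matrix (Fin R ⊕ Fin (N - R)) (Fin R ⊕ Fin (N - R)) ℂ :=
    fun t => (U t).map (fun x => (x:ℂ)) with hXce
  set Kc : Matrix (Fin R ⊕ Fin (N - R)) (Fin R ⊕ Fin (N - R)) ℂ :=
    diagonal (fun i => ((κv i : ℝ):ℂ)^2) with hKce
  set Minv : Matrix (Fin R ⊕ Fin (N - R)) (Fin R ⊕ Fin (N - R)) ℂ := (Uinf - ik)⁻¹ with hMinve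
  set gc : ℝ → Matrix (Fin R ⊕ Fin (N - R)) (Fin R ⊕ Fin (N - R)) ℂ :=
    fun t => diagonal (fun i => Complex.exp (Complex.I * k i * t)) * Minv with hgce
  set Vc : ℝ → Matrix (Fin R ⊕ Fin (N - R)) (Fin R ⊕ Fin (N - R)) ℂ :=
    fun t => Kc - Xc t * Xc t with hVce
  have hmapsubmul : ∀ M : Matrix (Fin R ⊕ Fin (N - R)) (Fin R ⊕ Fin (N - R)) ℝ,
      (K2 - M * M).map (fun x => (x:ℂ))
        = Kc - M.map (fun x => (x:ℂ)) * M.map (fun x => (x:ℂ)) := by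
    intro M; ext a b
    simp only [Matrix.map_apply, Matrix.sub_apply, Matrix.mul_apply, hK2e, hKce,
      Matrix.diagonal_apply, Complex.ofReal_sub, Complex.ofReal_sum, Complex.ofReal_mul,
      apply_ite (fun x : ℝ => (x:ℂ)), Complex.ofReal_pow, Complex.ofReal_zero]
  have hXD : ∀ r, 0 ≤ r → HasDerivAt Xc (Vc r) r := by
    intro r hr
    have hveq : Vc r = (K2 - U r * U r).map (fun x => (x:ℂ)) := by
      rw [hVce]; exact (hmapsubmul (U r)).symm
    rw [hveq]
    apply hasDerivAt_matrix; intro a b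
    have h2 := (hasDerivAt_entry (hUD r hr) a b).ofReal_comp
    simpa [hXce, Matrix.map_apply] using h2
  have hgD : ∀ r, HasDerivAt gc (ik * gc r) r := by
    intro r
    have h1 : HasDerivAt (fun t : ℝ => diagonal (fun i => Complex.exp (Complex.I * k i * t)) :
        ℝ → Matrix (Fin R ⊕ Fin (N - R)) (Fin R ⊕ Fin (N - R)) ℂ)
        (diagonal (fun i => Complex.I * k i * Complex.exp (Complex.I * k i * r))) r := by
      apply hasDerivAt_diagonal; intro i
      have h8 : HasDerivAt (fun t : ℝ => ((Complex.I * k i) * (t:ℂ))) (Complex.I * k i) r := by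
        simpa using (Complex.ofRealCLM.hasDerivAt (x := r)).const_mul (Complex.I * k i)
      have h9 := h8.cexp
      simpa [mul_comm] using h9
    have h3 := h1.mul_const Minv
    rw [hgce]
    refine h3.congr_deriv (Eq.symm ?_)
    rw [hike, ← mul_assoc, diagonal_mul_diagonal]
  have hftf : ∀ s, ft s = (Xc s - ik) * gc s := by
    intro s; rw [hfte]
    exact (mul_assoc _ _ _)
  set F1 : ℝ → Matrix (Fin R ⊕ Fin (N - R)) (Fin R ⊕ Fin (N - R)) ℂ :=
    fun t => Vc t * gc t + (Xc t - ik) * (ik * gc t) with hF1e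
  have hftD : ∀ r, 0 ≤ r → HasDerivAt (fun t => (Xc t - ik) * gc t) (F1 r) r := by
    intro r hr; rw [hF1e]; exact ((hXD r hr).sub_const ik).mul (hgD r)
  have hftd_eq : ∀ r, 0 ≤ r → ftd r = F1 r := by
    intro r hr; rw [hftde]; ext a b; simp only [Matrix.of_apply]
    have hcong : (fun t => ft t a b) = fun t => ((Xc t - ik) * gc t) a b := by
      funext t; rw [hftf t]
    rw [hcong]
    exact ((hasDerivAt_entry (hftD r hr) a b).hasDerivWithinAt.derivWithin
      (uniqueDiffOn_Ici (0:ℝ) r hr))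
  have hVD : ∀ r, 0 ≤ r → HasDerivAt Vc (-(Vc r * Xc r + Xc r * Vc r)) r := by
    intro r hr
    have h5 := ((hXD r hr).mul (hXD r hr)).const_sub Kc
    rw [hVce]
    exact h5
  have hF1D : ∀ r, 0 ≤ r → HasDerivAt F1
      ((-(Vc r * Xc r + Xc r * Vc r) * gc r + Vc r * (ik * gc r)) +
        (Vc r * (ik * gc r) + (Xc r - ik) * (ik * (ik * gc r)))) r := by
    intro r hr
    rw [hF1e]
    exact ((hVD r hr).mul (hgD r)).add (((hXD r hr).sub_const ik).mul ((hgD r).const_mul ik))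
  have hftdd_eq : ∀ r, 0 ≤ r → ftdd r =
      ((-(Vc r * Xc r + Xc r * Vc r) * gc r + Vc r * (ik * gc r)) +
        (Vc r * (ik * gc r) + (Xc r - ik) * (ik * (ik * gc r)))) := by
    intro r hr; rw [hftdde]; ext a b; simp only [Matrix.of_apply]
    have hcong : Set.EqOn (fun t => ftd t a b) (fun t => F1 t a b) (Set.Ici (0:ℝ)) := by
      intro t ht; exact congrFun (congrFun (congrArg (fun M a b => M a b) (hftd_eq t ht)) a) b
    rw [derivWithin_congr hcong (by exact congrFun (congrFun (congrArg (fun M a b => M a b) (hftd_eq r hr)) a) b)]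
    exact ((hasDerivAt_entry (hF1D r hr) a b).hasDerivWithinAt.derivWithin
      (uniqueDiffOn_Ici (0:ℝ) r hr))
  have hsm : z • (1 : Matrix (Fin R ⊕ Fin (N - R)) (Fin R ⊕ Fin (N - R)) ℂ)
      = diagonal (fun _ => z) := by
    ext a b
    by_cases hab : a = b <;> simp [Matrix.one_apply, Matrix.diagonal_apply, hab]
  have hP2 : ik * ik = Kc - z • (1 : Matrix (Fin R ⊕ Fin (N - R)) (Fin R ⊕ Fin (N - R)) ℂ) := by
    rw [hike, hKce, diagonal_mul_diagonal, hsm, Matrix.diagonal_sub]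
    refine congrArg diagonal (funext fun i => ?_)
    have h10 := hk i
    rw [← hκve] at h10
    linear_combination (k i)^2 * Complex.I_sq - h10
  have hKP : Kc * ik = ik * Kc := by
    rw [hike, hKce, diagonal_mul_diagonal, diagonal_mul_diagonal]
    exact congrArg diagonal (funext fun i => by ring)
  constructor
  · intro r hr
    rw [hftdd_eq r hr, hUd_eq r hr, hftf r, hmapsubmul (U r)]
    exact key_alg (Xc r) ik (gc r) Kc z hKP hP2
  · -- Tendsto part
    set κs : Fin R ⊕ Fin (N - R) → ℝ := Sum.elim κ' (fun j => -(κ'' j)) with hκse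
    have hκvl : ∀ i, κv (Sum.inl i) = κ' i := fun i => by rw [hκve]; rfl
    have hκvr : ∀ j, κv (Sum.inr j) = κ'' j := fun j => by rw [hκve]; rfl
    have hκsl : ∀ i, κs (Sum.inl i) = κ' i := fun i => by rw [hκse]; rfl
    have hκsr : ∀ j, κs (Sum.inr j) = -(κ'' j) := fun j => by rw [hκse]; rfl
    set Φ : ℝ → Matrix (Fin R ⊕ Fin (N - R)) (Fin R ⊕ Fin (N - R)) ℝ := fun t =>
      (diagonal (fun i => Real.exp (κv i * t)) * C +
        diagonal (fun i => Real.exp (-(κv i) * t)) * D) *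
        diagonal (fun i => Real.exp (-(κs i) * t)) with hΦe
    set Ψ : ℝ → Matrix (Fin R ⊕ Fin (N - R)) (Fin R ⊕ Fin (N - R)) ℝ := fun t =>
      (diagonal (fun i => κv i * Real.exp (κv i * t)) * C +
        diagonal (fun i => -(κv i) * Real.exp (-(κv i) * t)) * D) *
        diagonal (fun i => Real.exp (-(κs i) * t)) with hΨe
    have hsqne : ∀ i, Real.sqrt (κv i) ≠ 0 := fun i => ne_of_gt (Real.sqrt_pos.mpr (hκv i))
    have hΛnp : ∀ t, (diagonal (fun i => Real.exp (-(κs i) * t)) :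
        Matrix (Fin R ⊕ Fin (N - R)) (Fin R ⊕ Fin (N - R)) ℝ) *
        diagonal (fun i => Real.exp (κs i * t)) = 1 := by
      intro t
      rw [diagonal_mul_diagonal]
      rw [show (fun i => Real.exp (-(κs i) * t) * Real.exp (κs i * t)) = fun _ => (1:ℝ) from
        funext fun i => by rw [← Real.exp_add, show -(κs i) * t + κs i * t = 0 by ring, Real.exp_zero]]
      exact Matrix.diagonal_one
    have hΛpn : ∀ t, (diagonal (fun i => Real.exp (κs i * t)) :
        Matrix (Fin R ⊕ Fin (N - R)) (Fin R ⊕ Fin (N - R)) ℝ) *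
        diagonal (fun i => Real.exp (-(κs i) * t)) = 1 := by
      intro t
      rw [diagonal_mul_diagonal]
      rw [show (fun i => Real.exp (κs i * t) * Real.exp (-(κs i) * t)) = fun _ => (1:ℝ) from
        funext fun i => by rw [← Real.exp_add, show κs i * t + -(κs i) * t = 0 by ring, Real.exp_zero]]
      exact Matrix.diagonal_one
    have hinvΛ : ∀ t, (diagonal (fun i => Real.exp (κs i * t)) :
        Matrix (Fin R ⊕ Fin (N - R)) (Fin R ⊕ Fin (N - R)) ℝ)⁻¹
        = diagonal (fun i => Real.exp (-(κs i) * t)) := fun t => Matrix.inv_eq_right_inv (hΛpn t)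
    have hinvA : (diagonal (fun i => (Real.sqrt (κv i))⁻¹) :
        Matrix (Fin R ⊕ Fin (N - R)) (Fin R ⊕ Fin (N - R)) ℝ)⁻¹
        = diagonal (fun i => Real.sqrt (κv i)) := by
      apply Matrix.inv_eq_right_inv
      rw [diagonal_mul_diagonal]
      rw [show (fun i => (Real.sqrt (κv i))⁻¹ * Real.sqrt (κv i)) = fun _ => (1:ℝ) from
        funext fun i => inv_mul_cancel₀ (hsqne i)]
      exact Matrix.diagonal_one
    have hUrep : ∀ t, U t = diagonal (fun i => (Real.sqrt (κv i))⁻¹) * Ψ t *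
        Ring.inverse (Φ t) * diagonal (fun i => Real.sqrt (κv i)) := by
      intro t
      have hσfac : σ t = diagonal (fun i => (Real.sqrt (κv i))⁻¹) *
          (Φ t * diagonal (fun i => Real.exp (κs i * t))) := by
        have hx : ((diagonal (fun i => Real.exp (κv i * t)) * C +
            diagonal (fun i => Real.exp (-(κv i) * t)) * D) *
            diagonal (fun i => Real.exp (-(κs i) * t))) *
            diagonal (fun i => Real.exp (κs i * t))
            = (diagonal (fun i => Real.exp (κv i * t)) * C +
              diagonal (fun i => Real.exp (-(κv i) * t)) * D) := by
          rw [mul_assoc, hΛnp t, mul_one]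
        rw [hσe]
        simp only [hΦe]
        rw [hx]
      have hσ₁fac : σ₁ t = diagonal (fun i => (Real.sqrt (κv i))⁻¹) *
          (Ψ t * diagonal (fun i => Real.exp (κs i * t))) := by
        have hx : ((diagonal (fun i => κv i * Real.exp (κv i * t)) * C +
            diagonal (fun i => -(κv i) * Real.exp (-(κv i) * t)) * D) *
            diagonal (fun i => Real.exp (-(κs i) * t))) *
            diagonal (fun i => Real.exp (κs i * t))
            = (diagonal (fun i => κv i * Real.exp (κv i * t)) * C +
              diagonal (fun i => -(κv i) * Real.exp (-(κv i) * t)) * D) := by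
          rw [mul_assoc, hΛnp t, mul_one]
        rw [hσ₁e]
        simp only [hΨe]
        rw [hx]
      have hinvσ : (σ t)⁻¹ = (diagonal (fun i => Real.exp (-(κs i) * t)) * (Φ t)⁻¹) *
          diagonal (fun i => Real.sqrt (κv i)) := by
        rw [hσfac, Matrix.mul_inv_rev, Matrix.mul_inv_rev, hinvΛ, hinvA]
      have hU0 : U t = σ₁ t * (σ t)⁻¹ := by
        simp only [hUe]
        rw [hσd_eq]
      rw [hU0, hσ₁fac, hinvσ, Matrix.nonsing_inv_eq_ringInverse]
      simp only [mul_assoc]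
      rw [← mul_assoc (diagonal fun i => Real.exp (κs i * t))
        (diagonal fun i => Real.exp (-(κs i) * t)), hΛpn t, one_mul]
    -- entry values
    have hC11 : ∀ i j, C (Sum.inl i) (Sum.inl j) = if i = j then 1 else 0 := by
      intro i j; rw [hCe]; simp [Matrix.one_apply]
    have hC12 : ∀ i j, C (Sum.inl i) (Sum.inr j) = 0 := by
      intro i j; rw [hCe]; simp
    have hC21 : ∀ i j, C (Sum.inr i) (Sum.inl j) = Q₀ i j := by
      intro i j; rw [hCe]; simp
    have hC22 : ∀ i j, C (Sum.inr i) (Sum.inr j) = 0 := by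
      intro i j; rw [hCe]; simp
    have hD11 : ∀ i j, D (Sum.inl i) (Sum.inl j) = X₀ i j := by
      intro i j; rw [hDe]; simp
    have hD12 : ∀ i j, D (Sum.inl i) (Sum.inr j) = -(Q₀ j i) := by
      intro i j; rw [hDe]; simp
    have hD21 : ∀ i j, D (Sum.inr i) (Sum.inl j) = 0 := by
      intro i j; rw [hDe]; simp
    have hD22 : ∀ i j, D (Sum.inr i) (Sum.inr j) = if i = j then 1 else 0 := by
      intro i j; rw [hDe]; simp [Matrix.one_apply]
    have hΦentry : ∀ t a b, Φ t a b =
        (Real.exp (κv a * t) * C a b + Real.exp (-(κv a) * t) * D a b) *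
          Real.exp (-(κs b) * t) := by
      intro t a b
      simp only [hΦe]
      simp [Matrix.mul_diagonal, Matrix.add_apply, Matrix.diagonal_mul]
    have hΨentry : ∀ t a b, Ψ t a b =
        (κv a * Real.exp (κv a * t) * C a b + -(κv a) * Real.exp (-(κv a) * t) * D a b) *
          Real.exp (-(κs b) * t) := by
      intro t a b
      simp only [hΨe]
      simp [Matrix.mul_diagonal, Matrix.add_apply, Matrix.diagonal_mul, mul_assoc]
    have hΦlim : Tendsto Φ atTop (nhds 1) := by
      apply tendsto_matrix
      intro a b
      rcases a with i | i <;> rcases b with j | j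
      · rcases eq_or_ne i j with rfl | hij
        · rw [show ((1 : Matrix (Fin R ⊕ Fin (N - R)) (Fin R ⊕ Fin (N - R)) ℝ))
            (Sum.inl i) (Sum.inl i) = 1 by simp [Matrix.one_apply]]
          simp only [hΦentry, hκvl, hκsl, hC11, hD11, if_pos rfl]
          apply tend_shape1
          have := (tend_atom (A := (1:ℝ)) (c := κ' i + -(κ' i)) (L := (1:ℝ))
              (Or.inl ⟨by ring, rfl⟩)).add
            (tend_atom (A := X₀ i i) (c := -(κ' i) + -(κ' i)) (L := (0:ℝ))
              (Or.inr ⟨Or.inr (by have := hκ' i; linarith), rfl⟩))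
          simpa using this
        · rw [show ((1 : Matrix (Fin R ⊕ Fin (N - R)) (Fin R ⊕ Fin (N - R)) ℝ))
            (Sum.inl i) (Sum.inl j) = 0 by simp [Matrix.one_apply, hij]]
          simp only [hΦentry, hκvl, hκsl, hC11, hD11, if_neg hij]
          apply tend_shape1
          have := (tend_atom (A := (0:ℝ)) (c := κ' i + -(κ' j)) (L := (0:ℝ))
              (Or.inr ⟨Or.inl rfl, rfl⟩)).add
            (tend_atom (A := X₀ i j) (c := -(κ' i) + -(κ' j)) (L := (0:ℝ))
              (Or.inr ⟨Or.inr (by have := hκ' i; have := hκ' j; linarith), rfl⟩))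
          simpa using this
      · rw [show ((1 : Matrix (Fin R ⊕ Fin (N - R)) (Fin R ⊕ Fin (N - R)) ℝ))
          (Sum.inl i) (Sum.inr j) = 0 by simp [Matrix.one_apply]]
        simp only [hΦentry, hκvl, hκsr, hC12, hD12, neg_neg]
        apply tend_shape1
        have h2 : Tendsto (fun t : ℝ => -(Q₀ j i) * Real.exp ((-(κ' i) + κ'' j) * t))
            atTop (nhds 0) := by
          rcases hQ₀ i j with hq | hlt
          · exact tend_atom (Or.inr ⟨Or.inl (by rw [hq, neg_zero]), rfl⟩)
          · exact tend_atom (Or.inr ⟨Or.inr (by linarith), rfl⟩)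
        have := (tend_atom (A := (0:ℝ)) (c := κ' i + κ'' j) (L := (0:ℝ))
            (Or.inr ⟨Or.inl rfl, rfl⟩)).add h2
        simpa using this
      · rw [show ((1 : Matrix (Fin R ⊕ Fin (N - R)) (Fin R ⊕ Fin (N - R)) ℝ))
          (Sum.inr i) (Sum.inl j) = 0 by simp [Matrix.one_apply]]
        simp only [hΦentry, hκvr, hκsl, hC21, hD21]
        apply tend_shape1
        have h2 : Tendsto (fun t : ℝ => Q₀ i j * Real.exp ((κ'' i + -(κ' j)) * t))
            atTop (nhds 0) := by
          rcases hQ₀ j i with hq | hlt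
          · exact tend_atom (Or.inr ⟨Or.inl hq, rfl⟩)
          · exact tend_atom (Or.inr ⟨Or.inr (by linarith), rfl⟩)
        have := h2.add (tend_atom (A := (0:ℝ)) (c := -(κ'' i) + -(κ' j)) (L := (0:ℝ))
            (Or.inr ⟨Or.inl rfl, rfl⟩))
        simpa using this
      · rcases eq_or_ne i j with rfl | hij
        · rw [show ((1 : Matrix (Fin R ⊕ Fin (N - R)) (Fin R ⊕ Fin (N - R)) ℝ))
            (Sum.inr i) (Sum.inr i) = 1 by simp [Matrix.one_apply]]
          simp only [hΦentry, hκvr, hκsr, hC22, hD22, if_pos rfl, neg_neg]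
          apply tend_shape1
          have := (tend_atom (A := (0:ℝ)) (c := κ'' i + κ'' i) (L := (0:ℝ))
              (Or.inr ⟨Or.inl rfl, rfl⟩)).add
            (tend_atom (A := (1:ℝ)) (c := -(κ'' i) + κ'' i) (L := (1:ℝ))
              (Or.inl ⟨by ring, rfl⟩))
          simpa using this
        · rw [show ((1 : Matrix (Fin R ⊕ Fin (N - R)) (Fin R ⊕ Fin (N - R)) ℝ))
            (Sum.inr i) (Sum.inr j) = 0 by simp [Matrix.one_apply, hij]]
          simp only [hΦentry, hκvr, hκsr, hC22, hD22, if_neg hij, neg_neg]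
          apply tend_shape1
          have := (tend_atom (A := (0:ℝ)) (c := κ'' i + κ'' j) (L := (0:ℝ))
              (Or.inr ⟨Or.inl rfl, rfl⟩)).add
            (tend_atom (A := (0:ℝ)) (c := -(κ'' i) + κ'' j) (L := (0:ℝ))
              (Or.inr ⟨Or.inl rfl, rfl⟩))
          simpa using this
    have hΨlim : Tendsto Ψ atTop (nhds (diagonal κs)) := by
      apply tendsto_matrix
      intro a b
      rcases a with i | i <;> rcases b with j | j
      · rcases eq_or_ne i j with rfl | hij
        · rw [show (diagonal κs) (Sum.inl i) (Sum.inl i) = κ' i by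
            simp [Matrix.diagonal_apply, hκsl]]
          simp only [hΨentry, hκvl, hκsl, hC11, hD11, if_pos rfl]
          apply tend_shape2
          have := (tend_atom (A := κ' i * 1) (c := κ' i + -(κ' i)) (L := κ' i)
              (Or.inl ⟨by ring, by ring⟩)).add
            (tend_atom (A := -(κ' i) * X₀ i i) (c := -(κ' i) + -(κ' i)) (L := (0:ℝ))
              (Or.inr ⟨Or.inr (by have := hκ' i; linarith), rfl⟩))
          simpa using this
        · rw [show (diagonal κs) (Sum.inl i) (Sum.inl j) = 0 by
            simp [Matrix.diagonal_apply, hij]]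
          simp only [hΨentry, hκvl, hκsl, hC11, hD11, if_neg hij]
          apply tend_shape2
          have := (tend_atom (A := κ' i * 0) (c := κ' i + -(κ' j)) (L := (0:ℝ))
              (Or.inr ⟨Or.inl (by ring), rfl⟩)).add
            (tend_atom (A := -(κ' i) * X₀ i j) (c := -(κ' i) + -(κ' j)) (L := (0:ℝ))
              (Or.inr ⟨Or.inr (by have := hκ' i; have := hκ' j; linarith), rfl⟩))
          simpa using this
      · rw [show (diagonal κs) (Sum.inl i) (Sum.inr j) = 0 by
          simp [Matrix.diagonal_apply]]
        simp only [hΨentry, hκvl, hκsr, hC12, hD12, neg_neg]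
        apply tend_shape2
        have h2 : Tendsto (fun t : ℝ => (-(κ' i) * -(Q₀ j i)) * Real.exp ((-(κ' i) + κ'' j) * t))
            atTop (nhds 0) := by
          rcases hQ₀ i j with hq | hlt
          · exact tend_atom (Or.inr ⟨Or.inl (by rw [hq]; ring), rfl⟩)
          · exact tend_atom (Or.inr ⟨Or.inr (by linarith), rfl⟩)
        have := (tend_atom (A := κ' i * 0) (c := κ' i + κ'' j) (L := (0:ℝ))
            (Or.inr ⟨Or.inl (by ring), rfl⟩)).add h2
        simpa using this
      · rw [show (diagonal κs) (Sum.inr i) (Sum.inl j) = 0 by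
          simp [Matrix.diagonal_apply]]
        simp only [hΨentry, hκvr, hκsl, hC21, hD21]
        apply tend_shape2
        have h2 : Tendsto (fun t : ℝ => (κ'' i * Q₀ i j) * Real.exp ((κ'' i + -(κ' j)) * t))
            atTop (nhds 0) := by
          rcases hQ₀ j i with hq | hlt
          · exact tend_atom (Or.inr ⟨Or.inl (by rw [hq]; ring), rfl⟩)
          · exact tend_atom (Or.inr ⟨Or.inr (by linarith), rfl⟩)
        have := h2.add (tend_atom (A := -(κ'' i) * 0) (c := -(κ'' i) + -(κ' j)) (L := (0:ℝ))
            (Or.inr ⟨Or.inl (by ring), rfl⟩))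
        simpa using this
      · rcases eq_or_ne i j with rfl | hij
        · rw [show (diagonal κs) (Sum.inr i) (Sum.inr i) = -(κ'' i) by
            simp [Matrix.diagonal_apply, hκsr]]
          simp only [hΨentry, hκvr, hκsr, hC22, hD22, if_pos rfl, neg_neg]
          apply tend_shape2
          have := (tend_atom (A := κ'' i * 0) (c := κ'' i + κ'' i) (L := (0:ℝ))
              (Or.inr ⟨Or.inl (by ring), rfl⟩)).add
            (tend_atom (A := -(κ'' i) * 1) (c := -(κ'' i) + κ'' i) (L := -(κ'' i))
              (Or.inl ⟨by ring, by ring⟩))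
          simpa using this
        · rw [show (diagonal κs) (Sum.inr i) (Sum.inr j) = 0 by
            simp [Matrix.diagonal_apply, hij]]
          simp only [hΨentry, hκvr, hκsr, hC22, hD22, if_neg hij, neg_neg]
          apply tend_shape2
          have := (tend_atom (A := κ'' i * 0) (c := κ'' i + κ'' j) (L := (0:ℝ))
              (Or.inr ⟨Or.inl (by ring), rfl⟩)).add
            (tend_atom (A := -(κ'' i) * 0) (c := -(κ'' i) + κ'' j) (L := (0:ℝ))
              (Or.inr ⟨Or.inl (by ring), rfl⟩))
          simpa using this
    have hinvlim : Tendsto (fun t => Ring.inverse (Φ t)) atTop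
        (nhds (1 : Matrix (Fin R ⊕ Fin (N - R)) (Fin R ⊕ Fin (N - R)) ℝ)) := by
      have h1 := (NormedRing.inverse_continuousAt
        (1 : (Matrix (Fin R ⊕ Fin (N - R)) (Fin R ⊕ Fin (N - R)) ℝ)ˣ)).tendsto.comp hΦlim
      rw [Units.val_one, Ring.inverse_one] at h1
      exact h1
    have hUlim : Tendsto U atTop (nhds (diagonal κs)) := by
      have h2 := (((tendsto_const_nhds (x := diagonal (fun i => (Real.sqrt (κv i))⁻¹))
          (f := atTop)).mul hΨlim).mul hinvlim).mul
        (tendsto_const_nhds (x := diagonal (fun i => Real.sqrt (κv i))))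
      have h3 := h2.congr (fun t => (hUrep t).symm)
      have hval : diagonal (fun i => (Real.sqrt (κv i))⁻¹) * diagonal κs *
          (1 : Matrix (Fin R ⊕ Fin (N - R)) (Fin R ⊕ Fin (N - R)) ℝ) *
          diagonal (fun i => Real.sqrt (κv i)) = diagonal κs := by
        rw [mul_one, diagonal_mul_diagonal, diagonal_mul_diagonal]
        exact congrArg diagonal (funext fun i => by
          field_simp
          rw [mul_div_right_comm, div_self (hsqne i), one_mul])
      rw [hval] at h3
      exact h3
    -- complex limit
    have hUc : Uinf = (diagonal κs).map (fun x : ℝ => (x:ℂ)) := by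
      rw [hUinfe, Matrix.diagonal_map (by simp)]
      exact congrArg diagonal (funext fun i => by
        rcases i with i | j <;> simp [hκsl, hκsr])
    have hXlim : Tendsto Xc atTop (nhds Uinf) := by
      rw [hUc]
      apply tendsto_matrix
      intro a b
      have h3 := tendsto_entry hUlim a b
      have h4 := (Complex.continuous_ofReal.tendsto _).comp h3
      simpa [hXce, Matrix.map_apply, Function.comp_def] using h4
    -- product collapse
    have hexw : ∀ (x w : ℂ), Complex.exp x * w * Complex.exp (-x) = w := by
      intro x w
      rw [mul_comm, ← mul_assoc, ← Complex.exp_add, neg_add_cancel, Complex.exp_zero, one_mul]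
    have hwv : Minv = diagonal (Ring.inverse fun i =>
        (Sum.elim (fun i => ((κ' i : ℝ) : ℂ)) fun j => -((κ'' j : ℝ) : ℂ)) i
          - Complex.I * k i) := by
      rw [hMinve, hUinfe, hike, Matrix.diagonal_sub, Matrix.inv_diagonal]
    set wv : (Fin R ⊕ Fin (N - R)) → ℂ := Ring.inverse fun i =>
        (Sum.elim (fun i => ((κ' i : ℝ) : ℂ)) fun j => -((κ'' j : ℝ) : ℂ)) i
          - Complex.I * k i with hwve
    have hprod : ∀ r : ℝ, ft r * diagonal (fun i => Complex.exp (-(Complex.I * k i * r)))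
        = (Xc r - ik) * Minv := by
      intro r
      rw [hftf r]
      simp only [hgce]
      rw [hwv, mul_assoc, mul_assoc, diagonal_mul_diagonal, diagonal_mul_diagonal]
      exact congrArg _ (congrArg diagonal (funext fun i => by
        rw [← mul_assoc]; exact hexw _ _))
    intro a b
    have h6 : Tendsto (fun r => (Xc r - ik) * Minv) atTop (nhds ((Uinf - ik) * Minv)) :=
      (hXlim.sub tendsto_const_nhds).mul tendsto_const_nhds
    have h7 : (Uinf - ik) * Minv = 1 := by
      rw [hMinve]
      exact Matrix.mul_nonsing_inv _ ((Matrix.isUnit_iff_isUnit_det _).mp hUinfu)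
    rw [h7] at h6
    have h8 := tendsto_entry h6 a b
    exact h8.congr fun r => by rw [hprod r]

end MainAux

/-- Paper's Proposition 1, formula (52): `f̃(r) = (U(r) - ik)e^{ikr}(U_∞ - ik)⁻¹`
solves the transformed Schrödinger equation `f̃'' = (κ² - 2U')f̃ - z f̃` on `[0,∞)`
and satisfies `f̃(r)e^{-ikr} → I` as `r → ∞`; derivatives of quantities defined only
for `r ≥ 0` are taken within `[0,∞)`. -/
theorem prop1_jost_solution
    (N R : ℕ) (hN : 0 < N) (hR : R ≤ N)
    (κ' : Fin R → ℝ) (κ'' : Fin (N - R) → ℝ)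
    (hκ' : ∀ i, 0 < κ' i) (hκ'' : ∀ j, 0 < κ'' j)
    (Q₀ : Matrix (Fin (N - R)) (Fin R) ℝ)
    (hQ₀ : ∀ (i : Fin R) (j : Fin (N - R)), Q₀ j i = 0 ∨ κ'' j < κ' i)
    (X₀ : Matrix (Fin R) (Fin R) ℝ) (hX₀ : X₀.IsSymm)
    (k : Fin R ⊕ Fin (N - R) → ℂ) (z : ℂ)
    (hk : ∀ i, k i ^ 2 + ((Sum.elim κ' κ'' i : ℝ) : ℂ) ^ 2 = z) :
    let κv : Fin R ⊕ Fin (N - R) → ℝ := Sum.elim κ' κ''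
    let C : Matrix (Fin R ⊕ Fin (N - R)) (Fin R ⊕ Fin (N - R)) ℝ :=
      fromBlocks 1 0 Q₀ 0
    let D : Matrix (Fin R ⊕ Fin (N - R)) (Fin R ⊕ Fin (N - R)) ℝ :=
      fromBlocks X₀ (-Q₀ᵀ) 0 1
    let σ : ℝ → Matrix (Fin R ⊕ Fin (N - R)) (Fin R ⊕ Fin (N - R)) ℝ := fun s =>
      diagonal (fun i => (Real.sqrt (κv i))⁻¹) *
        (diagonal (fun i => Real.exp (κv i * s)) * C +
          diagonal (fun i => Real.exp (-(κv i) * s)) * D)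
    let σd : ℝ → Matrix (Fin R ⊕ Fin (N - R)) (Fin R ⊕ Fin (N - R)) ℝ := fun s =>
      Matrix.of fun i j => deriv (fun t => σ t i j) s
    let U : ℝ → Matrix (Fin R ⊕ Fin (N - R)) (Fin R ⊕ Fin (N - R)) ℝ := fun s =>
      σd s * (σ s)⁻¹
    let Ud : ℝ → Matrix (Fin R ⊕ Fin (N - R)) (Fin R ⊕ Fin (N - R)) ℝ := fun s =>
      Matrix.of fun i j => derivWithin (fun t => U t i j) (Set.Ici (0 : ℝ)) s
    let Uinf : Matrix (Fin R ⊕ Fin (N - R)) (Fin R ⊕ Fin (N - R)) ℂ :=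
      diagonal (Sum.elim (fun i => ((κ' i : ℝ) : ℂ)) fun j => -((κ'' j : ℝ) : ℂ))
    let ik : Matrix (Fin R ⊕ Fin (N - R)) (Fin R ⊕ Fin (N - R)) ℂ :=
      diagonal fun i => Complex.I * k i
    let ft : ℝ → Matrix (Fin R ⊕ Fin (N - R)) (Fin R ⊕ Fin (N - R)) ℂ := fun s =>
      ((U s).map (fun x => (x : ℂ)) - ik) *
        diagonal (fun i => Complex.exp (Complex.I * k i * s)) * (Uinf - ik)⁻¹
    let ftd : ℝ → Matrix (Fin R ⊕ Fin (N - R)) (Fin R ⊕ Fin (N - R)) ℂ := fun s =>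
      Matrix.of fun i j => derivWithin (fun t => ft t i j) (Set.Ici (0 : ℝ)) s
    let ftdd : ℝ → Matrix (Fin R ⊕ Fin (N - R)) (Fin R ⊕ Fin (N - R)) ℂ := fun s =>
      Matrix.of fun i j => derivWithin (fun t => ftd t i j) (Set.Ici (0 : ℝ)) s
    (∀ r : ℝ, 0 ≤ r → IsUnit (σ r)) →
    IsUnit (Uinf - ik) →
    (∀ r : ℝ, 0 ≤ r →
      ftdd r =
        (diagonal (fun i => ((κv i : ℝ) : ℂ) ^ 2) -
            (2 : ℂ) • (Ud r).map (fun x => (x : ℂ))) * ft r - z • ft r) ∧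
    Tendsto
      (fun r : ℝ => ft r * diagonal fun i => Complex.exp (-(Complex.I * k i * r)))
      atTop (nhds 1) := by
  intro κv C D σ σd U Ud Uinf ik ft ftd ftdd hσu hUinfu
  obtain ⟨h1, h2⟩ := prop1_aux N R κ' κ'' hκ' hκ'' Q₀ hQ₀ X₀ k z hk κv C D σ σd U Ud Uinf ik
    ft ftd ftdd rfl rfl rfl rfl rfl rfl rfl rfl rfl rfl rfl rfl hσu hUinfu
  exact ⟨h1, tendsto_pi_nhds.mpr fun a => tendsto_pi_nhds.mpr fun b => h2 a b⟩
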